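/- Let z : [0,∞) → ℝ¹⁴ be differentiable and satisfy ż(t) = A z(t) + E d(t) for all t ≥ 0, where ‖d(t)‖ ≤ r̄ for all t ≥ 0. Set α = λ_min(Q), c = 2‖P·E‖, R = (c/α) r̄, and ρ* = λ_max(P) R². Then forward invariance holds from any starting time: for every ρ ≥ ρ* and every t₀ ≥ 0, if V(z(t₀)) ≤ ρ then V(z(t)) ≤ ρ for all t ≥ t₀. -/

import Mathlib

open Matrix Filter

noncomputable section

abbrev V14 := EuclideanSpace ℝ (Fin 14)
abbrev V3 := EuclideanSpace ℝ (Fin 3)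

/-- Lyapunov function `V(z) = zᵀ P z`. -/
def lyapV (P : Matrix (Fin 14) (Fin 14) ℝ) (z : V14) : ℝ := z ⬝ᵥ P.mulVec z

/-- Right-hand side of the perturbed linear ODE `ż = A z + E d`, as an element of
Euclidean space. -/
def odeRHS (A : Matrix (Fin 14) (Fin 14) ℝ) (E : Matrix (Fin 14) (Fin 3) ℝ)
    (zt : V14) (dt : V3) : V14 := WithLp.toLp 2 (A.mulVec zt + E.mulVec dt)

/-- Operator norm of the matrix product `P·E` viewed as a linear map `ℝ³ → ℝ¹⁴`
between Euclidean spaces. -/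
def opPE (P : Matrix (Fin 14) (Fin 14) ℝ) (E : Matrix (Fin 14) (Fin 3) ℝ) : ℝ :=
  ‖LinearMap.toContinuousLinearMap (Matrix.toEuclideanLin (P * E))‖

/-- Smallest eigenvalue of a Hermitian (real symmetric) matrix. -/
def lamMin (Q : Matrix (Fin 14) (Fin 14) ℝ) (hQ : Q.IsHermitian) : ℝ := ⨅ i, hQ.eigenvalues i

/-- Largest eigenvalue of a Hermitian (real symmetric) matrix. -/
def lamMax (P : Matrix (Fin 14) (Fin 14) ℝ) (hP : P.IsHermitian) : ℝ := ⨆ i, hP.eigenvalues i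

/-! ### Auxiliary lemmas -/

section Aux

variable {n m : Type*} [Fintype n] [Fintype m] [DecidableEq n]

lemma aux_inner_dot (x y : EuclideanSpace ℝ n) : (inner ℝ x y : ℝ) = x ⬝ᵥ y := by
  simp [PiLp.inner_apply, dotProduct, mul_comm]

lemma aux_quad_eq_sum (M : Matrix n n ℝ) (hM : M.IsHermitian) (x : EuclideanSpace ℝ n) :
    x ⬝ᵥ M.mulVec x = ∑ i, hM.eigenvalues i * (inner ℝ (hM.eigenvectorBasis i) x : ℝ) ^ 2 := by
  classical
  set b := hM.eigenvectorBasis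
  have hT : (Matrix.toEuclideanLin M).IsSymmetric := (Matrix.isHermitian_iff_isSymmetric).1 hM
  have heig : ∀ i, Matrix.toEuclideanLin M (b i) = hM.eigenvalues i • b i := by
    intro i
    apply PiLp.ext
    intro j
    have := congrFun (hM.mulVec_eigenvectorBasis i) j
    simpa [Matrix.toEuclideanLin_apply] using this
  have key : (inner ℝ x (Matrix.toEuclideanLin M x) : ℝ)
      = ∑ i, hM.eigenvalues i * (inner ℝ (b i) x : ℝ) ^ 2 := by
    rw [← b.sum_inner_mul_inner x (Matrix.toEuclideanLin M x)]
    refine Finset.sum_congr rfl fun i _ => ?_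
    have h1 : (inner ℝ (b i) (Matrix.toEuclideanLin M x) : ℝ)
        = hM.eigenvalues i * inner ℝ (b i) x := by
      rw [← hT (b i) x, heig i, inner_smul_left]
      simp
    rw [h1, real_inner_comm x (b i)]
    ring
  rw [← key, aux_inner_dot]
  rfl

lemma aux_parseval (M : Matrix n n ℝ) (hM : M.IsHermitian) (x : EuclideanSpace ℝ n) :
    ‖x‖ ^ 2 = ∑ i, (inner ℝ (hM.eigenvectorBasis i) x : ℝ) ^ 2 := by
  have := hM.eigenvectorBasis.sum_inner_mul_inner x x
  rw [← real_inner_self_eq_norm_sq x, ← this]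
  refine Finset.sum_congr rfl fun i _ => ?_
  rw [real_inner_comm x]; ring

lemma aux_quad_ge [Nonempty n] (M : Matrix n n ℝ) (hM : M.IsHermitian)
    (x : EuclideanSpace ℝ n) :
    (⨅ i, hM.eigenvalues i) * ‖x‖ ^ 2 ≤ x ⬝ᵥ M.mulVec x := by
  rw [aux_quad_eq_sum M hM x, aux_parseval M hM x, Finset.mul_sum]
  refine Finset.sum_le_sum fun i _ => ?_
  exact mul_le_mul_of_nonneg_right (ciInf_le (Finite.bddBelow_range _) i) (sq_nonneg _)

lemma aux_quad_le [Nonempty n] (M : Matrix n n ℝ) (hM : M.IsHermitian)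
    (x : EuclideanSpace ℝ n) :
    x ⬝ᵥ M.mulVec x ≤ (⨆ i, hM.eigenvalues i) * ‖x‖ ^ 2 := by
  rw [aux_quad_eq_sum M hM x, aux_parseval M hM x, Finset.mul_sum]
  refine Finset.sum_le_sum fun i _ => ?_
  exact mul_le_mul_of_nonneg_right (le_ciSup (Finite.bddAbove_range _) i) (sq_nonneg _)

lemma aux_mulVec_dot_comm (M : Matrix n m ℝ) (x : m → ℝ) (y : n → ℝ) :
    (M *ᵥ x) ⬝ᵥ y = x ⬝ᵥ (Mᵀ *ᵥ y) := by
  rw [Matrix.dotProduct_mulVec, Matrix.vecMul_transpose]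

lemma aux_deriv_quad_form (A P : Matrix n n ℝ) (E : Matrix n m ℝ) (hP : Pᵀ = P)
    (z : n → ℝ) (d : m → ℝ) :
    (A *ᵥ z + E *ᵥ d) ⬝ᵥ (P *ᵥ z) + z ⬝ᵥ (P *ᵥ (A *ᵥ z + E *ᵥ d))
      = z ⬝ᵥ ((Aᵀ * P + P * A) *ᵥ z) + 2 * (z ⬝ᵥ ((P * E) *ᵥ d)) := by
  have h1 : (A *ᵥ z) ⬝ᵥ (P *ᵥ z) = z ⬝ᵥ ((Aᵀ * P) *ᵥ z) := by
    rw [aux_mulVec_dot_comm, Matrix.mulVec_mulVec]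
  have h2 : (E *ᵥ d) ⬝ᵥ (P *ᵥ z) = z ⬝ᵥ ((P * E) *ᵥ d) := by
    rw [aux_mulVec_dot_comm, Matrix.mulVec_mulVec,
      show Eᵀ * P = (P * E)ᵀ by rw [Matrix.transpose_mul, hP], ← aux_mulVec_dot_comm,
      dotProduct_comm]
  rw [add_dotProduct, Matrix.mulVec_add, dotProduct_add, Matrix.add_mulVec,
    dotProduct_add, h1, h2, Matrix.mulVec_mulVec, Matrix.mulVec_mulVec]
  ring

lemma aux_hasDerivAt_quad (P : Matrix n n ℝ) (z : ℝ → EuclideanSpace ℝ n)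
    (z' : EuclideanSpace ℝ n) (t : ℝ) (hz : HasDerivAt z z' t) :
    HasDerivAt (fun s => (z s) ⬝ᵥ (P *ᵥ (z s)))
      ((z t) ⬝ᵥ (P *ᵥ z') + z' ⬝ᵥ (P *ᵥ (z t))) t := by
  set T := LinearMap.toContinuousLinearMap (Matrix.toEuclideanLin P) with hT
  have hTz : HasDerivAt (fun s => T (z s)) (T z') t :=
    T.hasFDerivAt.comp_hasDerivAt t hz
  have h := hz.inner ℝ hTz
  have e1 : (fun s => (inner ℝ (z s) (T (z s)) : ℝ)) = fun s => (z s) ⬝ᵥ (P *ᵥ (z s)) := by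
    funext s; rw [aux_inner_dot]; rfl
  have e2 : (inner ℝ (z t) (T z') : ℝ) + inner ℝ z' (T (z t)) =
      (z t) ⬝ᵥ (P *ᵥ z') + z' ⬝ᵥ (P *ᵥ (z t)) := by
    rw [aux_inner_dot, aux_inner_dot]; rfl
  rw [e1, e2] at h
  exact h

end Aux

lemma aux_invariance {w w' : ℝ → ℝ} {t₀ ρ : ℝ}
    (hder : ∀ t, t₀ ≤ t → HasDerivAt w (w' t) t)
    (hneg : ∀ t, t₀ ≤ t → ρ ≤ w t → w' t ≤ 0)
    (h0 : w t₀ ≤ ρ) : ∀ t, t₀ ≤ t → w t ≤ ρ := by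
  intro T hT
  by_contra hcon
  push_neg at hcon
  have hcont : ContinuousOn w (Set.Icc t₀ T) := fun t ht =>
    ((hder t ht.1).continuousAt).continuousWithinAt
  set S := Set.Icc t₀ T ∩ w ⁻¹' Set.Iic ρ with hS
  have hSclosed : IsClosed S := hcont.preimage_isClosed_of_isClosed isClosed_Icc isClosed_Iic
  have hSne : S.Nonempty := ⟨t₀, ⟨le_refl _, hT⟩, h0⟩
  have hSbdd : BddAbove S := ⟨T, fun u hu => hu.1.2⟩
  set s := sSup S with hs
  have hsS : s ∈ S := hSclosed.csSup_mem hSne hSbdd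
  have hst₀ : t₀ ≤ s := hsS.1.1
  have hsT : s ≤ T := hsS.1.2
  have hws : w s ≤ ρ := hsS.2
  have hsltT : s < T := lt_of_le_of_ne hsT (fun h => absurd (h ▸ hws) (not_le.2 hcon))
  have hgt : ∀ u, u ∈ Set.Ioc s T → ρ ≤ w u := by
    intro u hu
    by_contra h
    push_neg at h
    have huS : u ∈ S := ⟨⟨hst₀.trans hu.1.le, hu.2⟩, h.le⟩
    exact absurd (le_csSup hSbdd huS) (not_le.2 hu.1)
  have hanti : AntitoneOn w (Set.Icc s T) := by
    apply antitoneOn_of_deriv_nonpos (convex_Icc s T)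
    · exact hcont.mono (Set.Icc_subset_Icc_left hst₀)
    · intro u hu
      rw [interior_Icc] at hu
      exact ((hder u (hst₀.trans hu.1.le)).differentiableAt).differentiableWithinAt
    · intro u hu
      rw [interior_Icc] at hu
      rw [(hder u (hst₀.trans hu.1.le)).deriv]
      exact hneg u (hst₀.trans hu.1.le) (hgt u ⟨hu.1, hu.2.le⟩)
  have : w T ≤ w s := hanti ⟨le_refl _, hsltT.le⟩ ⟨hsltT.le, le_refl _⟩ hsltT.le
  exact absurd (this.trans hws) (not_le.2 hcon)

/-- With `α = λ_min(Q)`, `c = 2‖P·E‖`, `R = (c/α) r̄`,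
`ρ* = λ_max(P) R²`: forward invariance holds from any starting time: for every
`ρ ≥ ρ*` and every `t₀ ≥ 0`, if `V(z(t₀)) ≤ ρ` then `V(z(t)) ≤ ρ` for all `t ≥ t₀`. -/
theorem stmt9
    (A : Matrix (Fin 14) (Fin 14) ℝ) (E : Matrix (Fin 14) (Fin 3) ℝ)
    (P Q : Matrix (Fin 14) (Fin 14) ℝ) (hP : P.PosDef) (hQ : Q.PosDef)
    (hLyap : (-Q - (Aᵀ * P + P * A)).PosSemidef)
    (rbar : ℝ) (hrbar : 0 ≤ rbar)
    (d : ℝ → V3) (hd : Continuous d) (hdbound : ∀ t, 0 ≤ t → ‖d t‖ ≤ rbar)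
    (z : ℝ → V14)
    (hode : ∀ t, 0 ≤ t → HasDerivAt z (odeRHS A E (z t) (d t)) t)
    (α c R ρstar : ℝ)
    (hα : α = lamMin Q hQ.isHermitian) (hc : c = 2 * opPE P E)
    (hR : R = (c / α) * rbar) (hρstar : ρstar = lamMax P hP.isHermitian * R ^ 2) :
    ∀ ρ, ρstar ≤ ρ → ∀ t₀, 0 ≤ t₀ → lyapV P (z t₀) ≤ ρ →
      ∀ t, t₀ ≤ t → lyapV P (z t) ≤ ρ := by
  intro ρ hρ t₀ ht₀ h0
  -- basic positivity facts
  have hαpos : 0 < α := by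
    rw [hα, lamMin]
    obtain ⟨j, hj⟩ := Finite.exists_min hQ.isHermitian.eigenvalues
    exact lt_of_lt_of_le (hQ.eigenvalues_pos j) (le_ciInf hj)
  have hlmaxpos : 0 < lamMax P hP.isHermitian := by
    rw [lamMax]
    exact lt_of_lt_of_le (hP.eigenvalues_pos 0) (le_ciSup (Finite.bddAbove_range _) 0)
  have hcnn : 0 ≤ c := by rw [hc, opPE]; positivity
  have hRnn : 0 ≤ R := by rw [hR]; exact mul_nonneg (div_nonneg hcnn hαpos.le) hrbar
  have hcR : c * rbar = α * R := by
    rw [hR]; field_simp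
  have hPt : Pᵀ = P := by
    ext i j
    simpa using congrFun (congrFun hP.isHermitian i) j
  -- the derivative of V along the solution
  set w' : ℝ → ℝ := fun t =>
    z t ⬝ᵥ ((Aᵀ * P + P * A) *ᵥ z t) + 2 * (z t ⬝ᵥ ((P * E) *ᵥ d t)) with hw'
  have hderiv : ∀ t, t₀ ≤ t → HasDerivAt (fun s => lyapV P (z s)) (w' t) t := by
    intro t ht
    have ht0 : (0 : ℝ) ≤ t := ht₀.trans ht
    have h := aux_hasDerivAt_quad P z _ t (hode t ht0)
    have heq : z t ⬝ᵥ (P *ᵥ (odeRHS A E (z t) (d t)))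
        + (odeRHS A E (z t) (d t)) ⬝ᵥ (P *ᵥ z t) = w' t := by
      rw [add_comm]
      exact aux_deriv_quad_form A P E hPt (z t) (d t)
    rw [heq] at h
    exact h
  -- the derivative is nonpositive whenever `ρ ≤ V(z t)`
  have hneg : ∀ t, t₀ ≤ t → ρ ≤ lyapV P (z t) → w' t ≤ 0 := by
    intro t ht hwt
    have ht0 : (0 : ℝ) ≤ t := ht₀.trans ht
    set x : V14 := z t with hx
    set nx : ℝ := ‖x‖ with hnx
    have hnxnn : 0 ≤ nx := norm_nonneg _
    -- bound on `‖z t‖` from below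
    have hub : lyapV P x ≤ lamMax P hP.isHermitian * nx ^ 2 :=
      aux_quad_le P hP.isHermitian x
    have hR2 : R ^ 2 ≤ nx ^ 2 := by
      have h1 : lamMax P hP.isHermitian * R ^ 2 ≤ lamMax P hP.isHermitian * nx ^ 2 := by
        calc lamMax P hP.isHermitian * R ^ 2 = ρstar := hρstar.symm
          _ ≤ ρ := hρ
          _ ≤ lyapV P x := hwt
          _ ≤ lamMax P hP.isHermitian * nx ^ 2 := hub
      exact le_of_mul_le_mul_left h1 hlmaxpos
    have hRnx : R ≤ nx := by
      nlinarith [sq_nonneg (nx - R), sq_nonneg (nx + R)]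
    -- Lyapunov inequality term
    have hLy : x ⬝ᵥ ((Aᵀ * P + P * A) *ᵥ x) ≤ -(x ⬝ᵥ (Q *ᵥ x)) := by
      have h := hLyap.dotProduct_mulVec_nonneg x
      simp only [Matrix.sub_mulVec, Matrix.neg_mulVec, dotProduct_sub,
        dotProduct_neg, star_trivial, RCLike.re_to_real] at h
      linarith
    have hQbound : α * nx ^ 2 ≤ x ⬝ᵥ (Q *ᵥ x) := by
      rw [hα, lamMin]
      exact aux_quad_ge Q hQ.isHermitian x
    -- cross term bound
    have hcross : x ⬝ᵥ ((P * E) *ᵥ d t) ≤ opPE P E * nx * ‖d t‖ := by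
      set T := LinearMap.toContinuousLinearMap (Matrix.toEuclideanLin (P * E)) with hT
      have h1 : x ⬝ᵥ ((P * E) *ᵥ d t) = (inner ℝ x (T (d t)) : ℝ) := by
        rw [aux_inner_dot]; rfl
      have h2 : (inner ℝ x (T (d t)) : ℝ) ≤ ‖x‖ * ‖T (d t)‖ := real_inner_le_norm _ _
      have h3 : ‖T (d t)‖ ≤ ‖T‖ * ‖d t‖ := T.le_opNorm _
      calc x ⬝ᵥ ((P * E) *ᵥ d t) = (inner ℝ x (T (d t)) : ℝ) := h1
        _ ≤ ‖x‖ * ‖T (d t)‖ := h2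
        _ ≤ ‖x‖ * (‖T‖ * ‖d t‖) := by
            exact mul_le_mul_of_nonneg_left h3 (norm_nonneg _)
        _ = opPE P E * nx * ‖d t‖ := by rw [opPE]; ring
    have hdb : ‖d t‖ ≤ rbar := hdbound t ht0
    have hcross2 : 2 * (x ⬝ᵥ ((P * E) *ᵥ d t)) ≤ α * R * nx := by
      have h4 : opPE P E * nx * ‖d t‖ ≤ opPE P E * nx * rbar :=
        mul_le_mul_of_nonneg_left hdb (mul_nonneg (norm_nonneg _) hnxnn)
      have h5 : 2 * (opPE P E * nx * rbar) = c * rbar * nx := by rw [hc]; ring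
      calc 2 * (x ⬝ᵥ ((P * E) *ᵥ d t)) ≤ 2 * (opPE P E * nx * rbar) := by linarith
        _ = c * rbar * nx := h5
        _ = α * R * nx := by rw [hcR]
    -- combine
    have : w' t ≤ -(α * nx ^ 2) + α * R * nx := by
      rw [hw']
      simp only
      rw [← hx]
      linarith
    nlinarith [mul_nonneg (mul_nonneg hαpos.le hnxnn) (sub_nonneg.2 hRnx)]
  exact aux_invariance hderiv hneg h0
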